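/- Let A be a set and M : A → A → A → ℝ≥0 a Frobenius algebra in the category of nonnegative-real matrices with ℓ²-summable rows and columns, i.e. satisfying the ℓ²-summability conditions and axioms (M), (C), (A), (F) as in the context. Then each disjoint summand is finite and M is constant on it with value 1/√d where d is the summand's cardinality: for all a, b, c ∈ A with M a b c ≠ 0, the set S(a) := {x : A | ∃ y, M a x y ≠ 0} is finite, and (M a b c : ℝ) = 1 / Real.sqrt (S(a).toFinset.card). -/

import Mathlib

open scoped NNReal Classical

namespace L2FrobAux

lemma mul_le_sq_add_sq (a b : ℝ≥0) : a * b ≤ a ^ 2 + b ^ 2 := by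
  rcases le_total a b with h | h
  · calc a * b ≤ b * b := mul_le_mul' h le_rfl
      _ = b ^ 2 := (pow_two b).symm
      _ ≤ a ^ 2 + b ^ 2 := le_add_self
  · calc a * b ≤ a * a := mul_le_mul' le_rfl h
      _ = a ^ 2 := (pow_two a).symm
      _ ≤ a ^ 2 + b ^ 2 := le_self_add

lemma summable_mul {ι : Type*} {f g : ι → ℝ≥0}
    (hf : Summable fun i => f i ^ 2) (hg : Summable fun i => g i ^ 2) :
    Summable fun i => f i * g i :=
  NNReal.summable_of_le (fun i => mul_le_sq_add_sq _ _) (hf.add hg)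

lemma tsum_ne_zero_iff' {ι : Type*} {f : ι → ℝ≥0} (hf : Summable f) :
    (∑' i, f i) ≠ 0 ↔ ∃ i, f i ≠ 0 := by
  constructor
  · intro h
    by_contra hc
    push_neg at hc
    exact h (by simp [hc])
  · rintro ⟨i, hi⟩ h
    exact hi (le_antisymm (h ▸ hf.le_tsum i (fun _ _ => zero_le)) (zero_le))

end L2FrobAux

namespace L2FrobAux

section Rel

variable {A : Type*} (T : A → A → A → Prop)
  (comm : ∀ a b c, T a b c → T b a c)
  (single : ∀ x y a a', T x y a → T x y a' → a = a')
  (assoc : ∀ a b c z, (∃ w, T a b w ∧ T w c z) ↔ (∃ w, T b c w ∧ T a w z))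
  (frob : ∀ a b c d, (∃ e, T a b e ∧ T c d e) ↔ (∃ w, T w d b ∧ T a w c))

include comm single assoc frob

/-- Every triple has a common "unit". -/
lemma unit_exists {x y z : A} (h : T x y z) :
    ∃ u, T u x x ∧ T u y y ∧ T u z z := by
  obtain ⟨w, hw1, hw2⟩ := (frob x y x y).1 ⟨z, h, h⟩
  -- hw1 : T w y y, hw2 : T x w x
  have hwx : T w x x := comm _ _ _ hw2
  have hwz : T w z z := by
    obtain ⟨q, hq1, hq2⟩ := (assoc w x y z).1 ⟨x, hwx, h⟩
    rwa [single _ _ _ _ hq1 h] at hq2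
  exact ⟨w, hwx, hw1, hwz⟩

/-- Division: if `p∙q` is defined then `q` is a multiple of `p`. -/
lemma divi {p q z : A} (h : T p q z) : ∃ w, T p w q := by
  obtain ⟨w, _, hw2⟩ := (frob p q q p).1 ⟨z, h, comm _ _ _ h⟩
  exact ⟨w, hw2⟩

/-- Totality on a component: elements sharing a unit can be multiplied. -/
lemma total {u x y : A} (hx : T u x x) (hy : T u y y) : ∃ z, T x y z := by
  obtain ⟨e, he, _⟩ := (frob x y x y).2 ⟨u, hy, comm _ _ _ hx⟩
  exact ⟨e, he⟩

/-- Uniqueness of units. -/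
lemma unit_unique {u u' x : A} (hu : T u x x) (hu' : T u' x x) : u = u' := by
  have key : ∀ v v' : A, T v x x → T v' x x → T v' v v := by
    intro v v' hv hv'
    obtain ⟨w, hw⟩ := divi T comm single assoc frob (comm _ _ _ hv)
    -- hw : T x w v
    obtain ⟨q, hq1, hq2⟩ := (assoc v' x w v).1 ⟨x, hv', hw⟩
    rwa [single _ _ _ _ hq1 hw] at hq2
  have h1 : T u' u u := key u u' hu hu'
  have h2 : T u u' u' := key u' u hu' hu
  exact single _ _ _ _ (comm _ _ _ h1) h2

/-- Cancellation. -/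
lemma cancel {x y y' z : A} (h : T x y z) (h' : T x y' z) : y = y' := by
  obtain ⟨w, hw1, hw2⟩ := (frob x y x y').1 ⟨z, h, h'⟩
  -- hw1 : T w y' y, hw2 : T x w x
  obtain ⟨v, hvx, hvy', _⟩ := unit_exists T comm single assoc frob h'
  have hwv : w = v := unit_unique T comm single assoc frob (comm _ _ _ hw2) hvx
  subst hwv
  exact single _ _ _ _ hw1 hvy'

/-- Unit propagation along a triple. -/
lemma unit_prop {u x y z : A} (h : T x y z) (hux : T u x x) :
    T u y y ∧ T u z z := by
  obtain ⟨v, hvx, hvy, hvz⟩ := unit_exists T comm single assoc frob h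
  have : v = u := unit_unique T comm single assoc frob hvx hux
  subst this
  exact ⟨hvy, hvz⟩

end Rel

end L2FrobAux

namespace L2FrobAux2

lemma summable_mul {ι : Type*} {f g : ι → ℝ≥0}
    (hf : Summable fun i => f i ^ 2) (hg : Summable fun i => g i ^ 2) :
    Summable fun i => f i * g i := by
  refine NNReal.summable_of_le (fun i => ?_) (hf.add hg)
  rcases le_total (f i) (g i) with h | h
  · calc f i * g i ≤ g i * g i := mul_le_mul' h le_rfl
      _ = g i ^ 2 := (pow_two _).symm
      _ ≤ f i ^ 2 + g i ^ 2 := le_add_self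
  · calc f i * g i ≤ f i * f i := mul_le_mul' le_rfl h
      _ = f i ^ 2 := (pow_two _).symm
      _ ≤ f i ^ 2 + g i ^ 2 := le_self_add

lemma tsum_ne_zero_iff' {ι : Type*} {f : ι → ℝ≥0} (hf : Summable f) :
    (∑' i, f i) ≠ 0 ↔ ∃ i, f i ≠ 0 := by
  constructor
  · intro h
    by_contra hc
    push_neg at hc
    exact h (by simp [hc])
  · rintro ⟨i, hi⟩ h
    exact hi (le_antisymm (h ▸ hf.le_tsum i (fun _ _ => zero_le)) (zero_le))

variable {A : Type*} (M : A → A → A → ℝ≥0)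

lemma sum_sec1 (hrow : ∀ a : A, Summable (fun p : A × A => (M p.1 p.2 a) ^ 2))
    (c z : A) : Summable fun w : A => (M w c z) ^ 2 := by
  have hi : Function.Injective (fun w : A => ((w, c) : A × A)) :=
    fun w w' h => congrArg Prod.fst h
  have h2 := ((NNReal.summable_coe
      (f := fun p : A × A => M p.1 p.2 z ^ 2)).2 (hrow z)).comp_injective hi
  have h3 : Summable fun w : A => ((M w c z ^ 2 : ℝ≥0) : ℝ) := by
    exact h2
  exact (NNReal.summable_coe (f := fun w : A => M w c z ^ 2)).1 h3

lemma sum_sec2 (hrow : ∀ a : A, Summable (fun p : A × A => (M p.1 p.2 a) ^ 2))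
    (a c : A) : Summable fun w : A => (M a w c) ^ 2 := by
  have hi : Function.Injective (fun w : A => ((a, w) : A × A)) :=
    fun w w' h => congrArg Prod.snd h
  have h2 := ((NNReal.summable_coe
      (f := fun p : A × A => M p.1 p.2 c ^ 2)).2 (hrow c)).comp_injective hi
  have h3 : Summable fun w : A => ((M a w c ^ 2 : ℝ≥0) : ℝ) := by
    exact h2
  exact (NNReal.summable_coe (f := fun w : A => M a w c ^ 2)).1 h3

lemma assocIff (hrow : ∀ a : A, Summable (fun p : A × A => (M p.1 p.2 a) ^ 2))
    (hcol : ∀ x y : A, Summable (fun c : A => (M x y c) ^ 2))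
    (hA : ∀ a b c z : A,
      (∑' w : A, M a b w * M w c z) = ∑' w : A, M b c w * M a w z)
    (a b c z : A) :
    (∃ w, M a b w ≠ 0 ∧ M w c z ≠ 0) ↔ (∃ w, M b c w ≠ 0 ∧ M a w z ≠ 0) := by
  have s1 : Summable fun w => M a b w * M w c z :=
    summable_mul (hcol a b) (sum_sec1 M hrow c z)
  have s2 : Summable fun w => M b c w * M a w z :=
    summable_mul (hcol b c) (sum_sec2 M hrow a z)
  have e1 := (tsum_ne_zero_iff' s1).symm
  have e2 := (tsum_ne_zero_iff' s2).symm
  simp only [ne_eq, mul_eq_zero, not_or] at e1 e2 ⊢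
  rw [e1, e2, hA]

lemma frobIff (hrow : ∀ a : A, Summable (fun p : A × A => (M p.1 p.2 a) ^ 2))
    (hcol : ∀ x y : A, Summable (fun c : A => (M x y c) ^ 2))
    (hF : ∀ a b c d : A,
      (∑' e : A, M a b e * M c d e) = ∑' b₁ : A, M b₁ d b * M a b₁ c)
    (a b c d : A) :
    (∃ e, M a b e ≠ 0 ∧ M c d e ≠ 0) ↔ (∃ w, M w d b ≠ 0 ∧ M a w c ≠ 0) := by
  have s1 : Summable fun e => M a b e * M c d e :=
    summable_mul (hcol a b) (hcol c d)
  have s2 : Summable fun w => M w d b * M a w c :=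
    summable_mul (sum_sec1 M hrow d b) (sum_sec2 M hrow a c)
  have e1 := (tsum_ne_zero_iff' s1).symm
  have e2 := (tsum_ne_zero_iff' s2).symm
  simp only [ne_eq, mul_eq_zero, not_or] at e1 e2 ⊢
  rw [e1, e2, hF]


lemma single' (hM : ∀ a a' : A, HasSum (fun p : A × A => M p.1 p.2 a * M p.1 p.2 a')
      (if a = a' then 1 else 0)) :
    ∀ x y a a', M x y a ≠ 0 → M x y a' ≠ 0 → a = a' := by
  intro x y a a' h1 h2
  by_contra hne
  have h0 := hM a a'
  rw [if_neg hne] at h0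
  have hle : M x y a * M x y a' ≤ 0 := by
    have := h0.summable.le_tsum (x, y) (fun _ _ => zero_le)
    rwa [h0.tsum_eq] at this
  exact mul_ne_zero h1 h2 (le_antisymm hle (zero_le))

lemma cocycle (hA : ∀ a b c z : A,
      (∑' w : A, M a b w * M w c z) = ∑' w : A, M b c w * M a w z)
    (single : ∀ x y a a', M x y a ≠ 0 → M x y a' ≠ 0 → a = a')
    (a b p c z q : A) (h1 : M a b p ≠ 0) (h3 : M b c q ≠ 0) :
    M a b p * M p c z = M b c q * M a q z := by
  have e1 : (∑' w, M a b w * M w c z) = M a b p * M p c z :=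
    tsum_eq_single p (fun w hw => by
      rcases eq_or_ne (M a b w) 0 with h | h
      · simp [h]
      · exact absurd (single a b w p h h1) hw)
  have e2 : (∑' w, M b c w * M a w z) = M b c q * M a q z :=
    tsum_eq_single q (fun w hw => by
      rcases eq_or_ne (M b c w) 0 with h | h
      · simp [h]
      · exact absurd (single b c w q h h3) hw)
  rw [← e1, ← e2, hA]

lemma fstar (hF : ∀ a b c d : A,
      (∑' e : A, M a b e * M c d e) = ∑' b₁ : A, M b₁ d b * M a b₁ c)
    (single : ∀ x y a a', M x y a ≠ 0 → M x y a' ≠ 0 → a = a')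
    (a b c d z w₀ : A) (h1 : M a b z ≠ 0)
    (huniq : ∀ w, M w d b ≠ 0 → w = w₀) :
    M a b z * M c d z = M w₀ d b * M a w₀ c := by
  have e1 : (∑' e, M a b e * M c d e) = M a b z * M c d z :=
    tsum_eq_single z (fun w hw => by
      rcases eq_or_ne (M a b w) 0 with h | h
      · simp [h]
      · exact absurd (single a b w z h h1) hw)
  have e2 : (∑' w, M w d b * M a w c) = M w₀ d b * M a w₀ c :=
    tsum_eq_single w₀ (fun w hw => by
      rcases eq_or_ne (M w d b) 0 with h | h
      · simp [h]
      · exact absurd (huniq w h) hw)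
  rw [← e1, ← e2, hF]

end L2FrobAux2
set_option linter.unusedSectionVars false
set_option linter.unusedVariables false

/-- For a Frobenius algebra in the category of nonnegative-real matrices with
ℓ²-summable rows and columns, each disjoint summand is finite and the matrix is
constant on it with value `1/√d`, where `d` is the cardinality of the summand. -/
theorem l2mat_frobenius_summand_finite {A : Type*} (M : A → A → A → ℝ≥0)
    (hrow : ∀ a : A, Summable (fun p : A × A => (M p.1 p.2 a) ^ 2))
    (hcol : ∀ x y : A, Summable (fun c : A => (M x y c) ^ 2))
    (hM : ∀ a a' : A, HasSum (fun p : A × A => M p.1 p.2 a * M p.1 p.2 a')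
      (if a = a' then 1 else 0))
    (hC : ∀ a b c : A, M a b c = M b a c)
    (hA : ∀ a b c z : A, (∑' w : A, M a b w * M w c z) = ∑' w : A, M b c w * M a w z)
    (hF : ∀ a b c d : A, (∑' e : A, M a b e * M c d e) = ∑' b₁ : A, M b₁ d b * M a b₁ c) :
    ∀ a b c : A, M a b c ≠ 0 →
      ∃ hfin : {x : A | ∃ y : A, M a x y ≠ 0}.Finite,
        (M a b c : ℝ) = 1 / Real.sqrt (hfin.toFinset.card) := by
  classical
  intro a b c habc
  set T : A → A → A → Prop := fun x y z => M x y z ≠ 0 with hTdef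
  have comm : ∀ x y z, T x y z → T y x z := by
    intro x y z h
    show M y x z ≠ 0
    rw [hC y x z]
    exact h
  have single : ∀ x y z z', T x y z → T x y z' → z = z' :=
    L2FrobAux2.single' M hM
  have assoc : ∀ a b c z, (∃ w, T a b w ∧ T w c z) ↔ (∃ w, T b c w ∧ T a w z) :=
    fun a b c z => L2FrobAux2.assocIff M hrow hcol hA a b c z
  have frob : ∀ a b c d, (∃ e, T a b e ∧ T c d e) ↔ (∃ w, T w d b ∧ T a w c) :=
    fun a b c d => L2FrobAux2.frobIff M hrow hcol hF a b c d
  -- the common unit of the component of `a`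
  obtain ⟨u, hua, hub, huc⟩ := L2FrobAux.unit_exists T comm single assoc frob habc
  have huu : T u u u := by
    obtain ⟨v, hvu, hva, -⟩ := L2FrobAux.unit_exists T comm single assoc frob hua
    have hv : v = u := L2FrobAux.unit_unique T comm single assoc frob hva hua
    rw [hv] at hvu
    exact hvu
  set μ := M u u u with hμdef
  have hμ : μ ≠ 0 := huu
  -- the value of a unit acting on anything in the component is μ
  have V1 : ∀ x, T u x x → M u x x = μ := by
    intro x hx
    have hxu : T x u x := comm _ _ _ hx
    have e := L2FrobAux2.cocycle M hA single x u x u x u hxu huu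
    -- e : M x u x * M x u x = M u u u * M x u x
    have e2 : M x u x = M u u u := mul_right_cancel₀ hxu e
    rw [hC u x x]
    exact e2
  have compStep : ∀ x y z, T x y z → T u x x → T u y y ∧ T u z z :=
    fun x y z h hx => L2FrobAux.unit_prop T comm single assoc frob h hx
  -- the Frobenius "star" identity
  have star : ∀ c' d s d', T c' d s → T d d' u → T u c' c' → T u d d →
      T s d' c' ∧ μ * M c' d s = M d' d u * M s d' c' := by
    intro c' d s d' hcd hdd' hucc hudd
    have hus : T u s s := (compStep _ _ _ hcd hucc).2
    have hsd'c : T s d' c' := by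
      obtain ⟨p, hp1, hp2⟩ := (assoc c' d d' c').2 ⟨u, hdd', comm _ _ _ hucc⟩
      rwa [single _ _ _ _ hp1 hcd] at hp2
    have huniq : ∀ w, M w d u ≠ 0 → w = d' := by
      intro w hw
      exact L2FrobAux.cancel T comm single assoc frob (comm _ _ _ hw) hdd'
    have e := L2FrobAux2.fstar M hF single s u c' d s d' (comm _ _ _ hus) huniq
    -- e : M s u s * M c' d s = M d' d u * M s d' c'
    have hsus : M s u s = μ := by
      rw [hC s u s]
      exact V1 s hus
    refine ⟨hsd'c, ?_⟩
    rw [← hsus]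
    exact e
  -- inverse pairs have value μ
  have V3 : ∀ d d', T u d d → T d d' u → M d d' u = μ := by
    intro d d' hud hdd'
    obtain ⟨-, e⟩ := star u d d d' hud hdd' huu hud
    -- e : μ * M u d d = M d' d u * M d d' u
    rw [V1 d hud, hC d' d u] at e
    calc M d d' u = NNReal.sqrt (M d d' u * M d d' u) := by
          rw [NNReal.sqrt_mul_self]
      _ = NNReal.sqrt (μ * μ) := by rw [← e]
      _ = μ := NNReal.sqrt_mul_self μ
  -- the matrix is constant μ on the component
  have V4 : ∀ x y z, T x y z → T u x x → M x y z = μ := by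
    intro x y z hxyz hux
    obtain ⟨huy, huz⟩ := compStep _ _ _ hxyz hux
    obtain ⟨y', hyy'⟩ := L2FrobAux.divi T comm single assoc frob (comm _ _ _ huy)
    -- hyy' : T y y' u
    obtain ⟨hzy'x, e1⟩ := star x y z y' hxyz hyy' hux huy
    have hinv : M y y' u = μ := V3 y y' huy hyy'
    rw [hC y' y u, hinv] at e1
    -- e1 : μ * M x y z = μ * M z y' x
    have e1' : M x y z = M z y' x := mul_left_cancel₀ hμ e1
    have e2 := L2FrobAux2.cocycle M hA single x y z y' x u hxyz hyy'
    -- e2 : M x y z * M z y' x = M y y' u * M x u x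
    have hxux : M x u x = μ := by
      rw [hC x u x]
      exact V1 x hux
    rw [hinv, hxux, ← e1'] at e2
    -- e2 : M x y z * M x y z = μ * μ
    calc M x y z = NNReal.sqrt (M x y z * M x y z) := by rw [NNReal.sqrt_mul_self]
      _ = NNReal.sqrt (μ * μ) := by rw [e2]
      _ = μ := NNReal.sqrt_mul_self μ
  -- constancy on the fiber of a
  have hPval : ∀ p : A × A, M p.1 p.2 a ≠ 0 → M p.1 p.2 a = μ := by
    intro p hp
    obtain ⟨v, hv1, hv2, hv3⟩ := L2FrobAux.unit_exists T comm single assoc frob hp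
    have hv : v = u := L2FrobAux.unit_unique T comm single assoc frob hv3 hua
    rw [hv] at hv1
    exact V4 _ _ _ hp hv1
  have hsum1 : HasSum (fun p : A × A => M p.1 p.2 a * M p.1 p.2 a) 1 := by
    simpa using hM a a
  set P : Set (A × A) := {p | M p.1 p.2 a ≠ 0} with hPdef
  have hPfin : P.Finite := by
    rw [← Set.not_infinite]
    intro hinf
    obtain ⟨n, hn⟩ := exists_nat_gt ((μ * μ)⁻¹ : ℝ≥0)
    obtain ⟨F, hFP, hFcard⟩ := hinf.exists_subset_card_eq n
    have hsumF : ∑ p ∈ F, M p.1 p.2 a * M p.1 p.2 a = (n : ℝ≥0) * (μ * μ) := by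
      rw [Finset.sum_congr rfl (fun p hp => by rw [hPval p (hFP hp)]),
        Finset.sum_const, hFcard, nsmul_eq_mul]
    have hle : ∑ p ∈ F, M p.1 p.2 a * M p.1 p.2 a ≤ 1 := by
      have h := Summable.sum_le_tsum F (fun p _ => zero_le) hsum1.summable
      rwa [hsum1.tsum_eq] at h
    rw [hsumF] at hle
    have hμμ : (0 : ℝ≥0) < μ * μ := zero_lt_iff.mpr (mul_ne_zero hμ hμ)
    have hlt : (1 : ℝ≥0) < n * (μ * μ) := by
      have h2 := mul_lt_mul_of_pos_right hn hμμ
      rwa [inv_mul_cancel₀ (ne_of_gt hμμ)] at h2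
    exact absurd hlt (not_lt.2 hle)
  have hcardP : ((hPfin.toFinset.card : ℝ≥0)) * (μ * μ) = 1 := by
    have h2 : HasSum (fun p : A × A => M p.1 p.2 a * M p.1 p.2 a)
        (∑ p ∈ hPfin.toFinset, M p.1 p.2 a * M p.1 p.2 a) := by
      apply hasSum_sum_of_ne_finset_zero
      intro p hp
      have hnot : p ∉ P := fun hmem => hp (hPfin.mem_toFinset.2 hmem)
      have hz : M p.1 p.2 a = 0 := not_not.1 hnot
      rw [hz, zero_mul]
    have he := hsum1.unique h2
    rw [Finset.sum_congr rfl (fun p hp => by rw [hPval p (hPfin.mem_toFinset.1 hp)]),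
      Finset.sum_const, nsmul_eq_mul] at he
    exact he.symm
  have hSim : {x : A | ∃ y : A, M a x y ≠ 0} = Prod.fst '' P := by
    ext x
    constructor
    · rintro ⟨y, hy⟩
      obtain ⟨v, hv1, hv2, -⟩ := L2FrobAux.unit_exists T comm single assoc frob hy
      have hv : v = u := L2FrobAux.unit_unique T comm single assoc frob hv1 hua
      rw [hv] at hv2
      obtain ⟨z0, hz0⟩ := L2FrobAux.total T comm single assoc frob hv2 hua
      obtain ⟨w, hw⟩ := L2FrobAux.divi T comm single assoc frob hz0
      exact ⟨(x, w), hw, rfl⟩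
    · rintro ⟨⟨x', w⟩, hmem, rfl⟩
      obtain ⟨v, hv1, hv2, hv3⟩ := L2FrobAux.unit_exists T comm single assoc frob hmem
      have hv : v = u := L2FrobAux.unit_unique T comm single assoc frob hv3 hua
      rw [hv] at hv1
      obtain ⟨z0, hz0⟩ := L2FrobAux.total T comm single assoc frob hua hv1
      exact ⟨z0, hz0⟩
  have hInj : Set.InjOn Prod.fst P := by
    rintro ⟨x1, y1⟩ h1 ⟨x2, y2⟩ h2 h
    simp only at h
    subst h
    have hy : y1 = y2 := L2FrobAux.cancel T comm single assoc frob h1 h2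
    rw [hy]
  have hSfin : {x : A | ∃ y : A, M a x y ≠ 0}.Finite := by
    rw [hSim]
    exact hPfin.image Prod.fst
  refine ⟨hSfin, ?_⟩
  have hScard : hSfin.toFinset.card = hPfin.toFinset.card := by
    rw [← Set.ncard_eq_toFinset_card _ hSfin, ← Set.ncard_eq_toFinset_card _ hPfin,
      hSim, Set.ncard_image_of_injOn hInj]
  have hval : M a b c = μ := V4 a b c habc hua
  rw [hval]
  have hd : ((hSfin.toFinset.card : ℝ≥0)) * (μ * μ) = 1 := by
    rw [hScard]
    exact hcardP
  have hdR : ((hSfin.toFinset.card : ℝ)) * ((μ : ℝ) * (μ : ℝ)) = 1 := by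
    exact_mod_cast congrArg (fun t : ℝ≥0 => (t : ℝ)) hd
  have hμR : (0 : ℝ) < (μ : ℝ) := by
    exact_mod_cast (zero_lt_iff.mpr hμ : (0 : ℝ≥0) < μ)
  have hcard : ((hSfin.toFinset.card : ℝ)) = (1 / (μ : ℝ)) ^ 2 := by
    have h1 : ((hSfin.toFinset.card : ℝ)) = 1 / ((μ : ℝ) * (μ : ℝ)) := by
      rw [eq_div_iff (by positivity)]
      exact hdR
    rw [h1, div_pow, one_pow, pow_two]
  rw [hcard, Real.sqrt_sq (by positivity), one_div_one_div]
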